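/- Let p ≥ 7 be a prime, m = p−1, and work over an algebraic closure of F_p. Every tuple (x₁,...,x_{p-1}) satisfying x₁^k + ... + x_{p-1}^k = 0 for 1 ≤ k ≤ p−3 also satisfies x₁^k + ... + x_{p-1}^k = 0 for all k with p+1 ≤ k ≤ 2p−5. In particular each such tuple lies on the Hermitian hypersurface x₁^{p+1} + ... + x_{p-1}^{p+1} = 0. -/

import Mathlib

open MvPolynomial Finset

set_option maxHeartbeats 1000000

/-- Auxiliary: evaluated elementary symmetric functions of the point `x`. -/
private noncomputable def stmt11E (p : ℕ) [Fact p.Prime]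
    (x : Fin (p - 1) → AlgebraicClosure (ZMod p)) (k : ℕ) : AlgebraicClosure (ZMod p) :=
  MvPolynomial.eval x (esymm (Fin (p - 1)) (AlgebraicClosure (ZMod p)) k)

/-- Auxiliary: extraction of the power sum from the Newton relation, for an
abstract sequence `E` of elementary symmetric values. -/
private theorem stmt11_aux (p : ℕ) [Fact p.Prime] (hp7 : 7 ≤ p)
    (x : Fin (p - 1) → AlgebraicClosure (ZMod p))
    (hsol : ∀ k : ℕ, 1 ≤ k → k ≤ p - 3 → ∑ i, x i ^ k = 0)
    (E : ℕ → AlgebraicClosure (ZMod p))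
    (hE0 : E 0 = 1)
    (hEbig : ∀ k : ℕ, p - 1 < k → E k = 0)
    (hEsmall : ∀ k : ℕ, 1 ≤ k → k ≤ p - 3 → E k = 0)
    (k : ℕ) (hk1 : p + 1 ≤ k) (hk2 : k ≤ 2 * p - 5)
    (hsum : ∑ a ∈ (antidiagonal k).filter (fun a => a.1 < k),
        ((-1 : AlgebraicClosure (ZMod p)) ^ a.1 * E a.1 * ∑ i, x i ^ a.2) = 0) :
    ∑ i, x i ^ k = 0 := by
  have hmem : ((0 : ℕ), k) ∈ (antidiagonal k).filter (fun a => a.1 < k) := by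
    rw [Finset.mem_filter, Finset.HasAntidiagonal.mem_antidiagonal]
    exact ⟨by omega, by omega⟩
  have hsingle : ∑ a ∈ (antidiagonal k).filter (fun a => a.1 < k),
      ((-1 : AlgebraicClosure (ZMod p)) ^ a.1 * E a.1 * ∑ i, x i ^ a.2) =
      (-1 : AlgebraicClosure (ZMod p)) ^ 0 * E 0 * ∑ i, x i ^ k := by
    refine Finset.sum_eq_single_of_mem (f := fun a : ℕ × ℕ => (-1 : AlgebraicClosure (ZMod p)) ^ a.1 * E a.1 * ∑ i, x i ^ a.2) ((0 : ℕ), k) hmem fun a ha hne => ?_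
    rw [Finset.mem_filter, Finset.HasAntidiagonal.mem_antidiagonal] at ha
    have ha1 : 1 ≤ a.1 := by
      rcases Nat.eq_zero_or_pos a.1 with h0 | h0
      · exact absurd (Prod.ext h0 (by omega)) hne
      · exact h0
    rcases le_or_gt a.1 (p - 3) with hc1 | hc1
    · rw [hEsmall a.1 ha1 hc1, mul_zero, zero_mul]
    · rcases le_or_gt a.1 (p - 1) with hc2 | hc2
      · rw [hsol a.2 (by omega) (by omega), mul_zero]
      · rw [hEbig a.1 hc2, mul_zero, zero_mul]
  rw [hsingle, hE0, pow_zero, one_mul, one_mul] at hsum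
  exact hsum

/-- Auxiliary: vanishing of the small elementary symmetric values, for an
abstract sequence `E` satisfying Newton's identities. -/
private theorem stmt11_aux2 (p : ℕ) [Fact p.Prime] (hp7 : 7 ≤ p)
    (x : Fin (p - 1) → AlgebraicClosure (ZMod p))
    (hsol : ∀ k : ℕ, 1 ≤ k → k ≤ p - 3 → ∑ i, x i ^ k = 0)
    (E : ℕ → AlgebraicClosure (ZMod p))
    (newton : ∀ k : ℕ, (k : AlgebraicClosure (ZMod p)) * E k =
      (-1) ^ (k + 1) *
        ∑ a ∈ (antidiagonal k).filter (fun a => a.1 < k),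
          (-1) ^ a.1 * E a.1 * ∑ i, x i ^ a.2)
    (k : ℕ) (h1 : 1 ≤ k) (h2 : k ≤ p - 3) : E k = 0 := by
  have hprime : p.Prime := Fact.out
  have h := newton k
  have hsum : ∑ a ∈ (antidiagonal k).filter (fun a => a.1 < k),
      ((-1 : AlgebraicClosure (ZMod p)) ^ a.1 * E a.1 * ∑ i, x i ^ a.2) = 0 := by
    refine Finset.sum_eq_zero fun a ha => ?_
    rw [Finset.mem_filter, Finset.HasAntidiagonal.mem_antidiagonal] at ha
    rw [hsol a.2 (by omega) (by omega), mul_zero]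
  rw [hsum, mul_zero] at h
  have hkne : (k : AlgebraicClosure (ZMod p)) ≠ 0 := by
    intro h0
    have hdvd : p ∣ k := (CharP.cast_eq_zero_iff (AlgebraicClosure (ZMod p)) p k).mp h0
    have := Nat.le_of_dvd (by omega) hdvd
    omega
  exact (mul_eq_zero.mp h).resolve_left hkne

/-- For m = p-1 over the algebraic closure of F_p, every solution of the
power-sum system of degrees 1..p-3 also satisfies the power-sum equations of
all degrees k with p+1 ≤ k ≤ 2p−5; in particular it lies on the Hermitian
hypersurface of degree p+1. -/
theorem stmt11 (p : ℕ) [Fact p.Prime] (hp7 : 7 ≤ p)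
    (x : Fin (p - 1) → AlgebraicClosure (ZMod p))
    (hsol : ∀ k : ℕ, 1 ≤ k → k ≤ p - 3 → ∑ i, x i ^ k = 0) :
    (∀ k : ℕ, p + 1 ≤ k → k ≤ 2 * p - 5 → ∑ i, x i ^ k = 0) ∧
      ∑ i, x i ^ (p + 1) = 0 := by
  classical
  have hP : ∀ k : ℕ,
      MvPolynomial.eval x (psum (Fin (p - 1)) (AlgebraicClosure (ZMod p)) k) =
        ∑ i, x i ^ k := by
    intro k; simp [psum]
  have hE0 : stmt11E p x 0 = 1 := by simp [stmt11E, esymm_zero]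
  -- Newton's identities, evaluated at x
  have newton : ∀ k : ℕ, (k : AlgebraicClosure (ZMod p)) * stmt11E p x k =
      (-1) ^ (k + 1) *
        ∑ a ∈ (antidiagonal k).filter (fun a => a.1 < k),
          (-1) ^ a.1 * stmt11E p x a.1 * ∑ i, x i ^ a.2 := by
    intro k
    have h := congrArg (MvPolynomial.eval x)
      (mul_esymm_eq_sum (Fin (p - 1)) (AlgebraicClosure (ZMod p)) k)
    simp only [map_mul, map_sum, map_pow, map_natCast, map_neg, map_one] at h
    simpa only [stmt11E, hP] using h
  -- esymm vanishes above the number of variables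
  have hEbig : ∀ k : ℕ, p - 1 < k → stmt11E p x k = 0 := by
    intro k hk
    have hcard : (Finset.univ : Finset (Fin (p - 1))).card < k := by
      simpa using hk
    simp [stmt11E, esymm, Finset.powersetCard_eq_empty.mpr hcard]
  have hEsmall : ∀ k : ℕ, 1 ≤ k → k ≤ p - 3 → stmt11E p x k = 0 :=
    stmt11_aux2 p hp7 x hsol (stmt11E p x) newton
  -- main claim
  have main : ∀ k : ℕ, p + 1 ≤ k → k ≤ 2 * p - 5 → ∑ i, x i ^ k = 0 := by
    intro k hk1 hk2
    have h := newton k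
    rw [hEbig k (by omega), mul_zero] at h
    have hsum : ∑ a ∈ (antidiagonal k).filter (fun a => a.1 < k),
        ((-1 : AlgebraicClosure (ZMod p)) ^ a.1 * stmt11E p x a.1 * ∑ i, x i ^ a.2) = 0 := by
      rcases mul_eq_zero.mp h.symm with h1 | h1
      · exact absurd h1 (pow_ne_zero _ (neg_ne_zero.mpr one_ne_zero))
      · exact h1
    exact stmt11_aux p hp7 x hsol (stmt11E p x) hE0 hEbig hEsmall k hk1 hk2 hsum
  exact ⟨main, main (p + 1) le_rfl (by omega)⟩
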